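/- Let k > 0 and define V(θ) = (kθ/(k+1))^k · θ/(k+1) + 1 for θ ∈ (0, (k+1)/k]. For each x ∈ (0,1], the supremum over θ ∈ (0,(k+1)/k] of log(θ - x) - log(V(θ) - 1) equals log(x^{-k}) and is attained uniquely at θ*(x) = x(k+1)/k. -/

import Mathlib

open Real Set

lemma keyfun_deriv (k x : ℝ) (hk : 0 < k) (s : ℝ) (hs : 0 < s) :
    HasDerivAt (fun t : ℝ => t ^ (k+1) - (k+1)*x^k*t + k*x^(k+1))
      ((k+1)*s^k - (k+1)*x^k) s := by
  have h1 : HasDerivAt (fun t : ℝ => t ^ (k+1)) ((k+1)*s^(k+1-1)) s :=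
    Real.hasDerivAt_rpow_const (Or.inl hs.ne')
  have h2 : HasDerivAt (fun t : ℝ => (k+1)*x^k*t) ((k+1)*x^k) s := by
    simpa using (hasDerivAt_id s).const_mul ((k+1)*x^k)
  have := (h1.sub h2).add_const (k*x^(k+1))
  simpa using this

lemma key (k x t : ℝ) (hk : 0 < k) (hx : 0 < x) (ht : 0 < t) (hne : t ≠ x) :
    (k+1)*x^k*t - k*x^(k+1) < t ^ (k+1) := by
  set f : ℝ → ℝ := fun t => t ^ (k+1) - (k+1)*x^k*t + k*x^(k+1) with hf
  have hfx : f x = 0 := by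
    have : x ^ (k+1) = x ^ k * x := by
      rw [Real.rpow_add hx, Real.rpow_one]
    simp only [hf, this]; ring
  suffices h : 0 < f t by simp only [hf] at h; linarith
  rcases lt_or_gt_of_ne hne with hlt | hgt
  · -- t < x : f strictly antitone on Ioc 0 x
    have hanti : StrictAntiOn f (Ioc 0 x) := by
      apply strictAntiOn_of_deriv_neg (convex_Ioc 0 x)
      · intro s hs
        exact (keyfun_deriv k x hk s hs.1).continuousAt.continuousWithinAt
      · intro s hs
        rw [interior_Ioc] at hs
        rw [(keyfun_deriv k x hk s hs.1).deriv]
        have : s ^ k < x ^ k := Real.rpow_lt_rpow hs.1.le hs.2 hk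
        nlinarith
    have := hanti ⟨ht, hlt.le⟩ ⟨hx, le_refl x⟩ hlt
    rw [hfx] at this; exact this
  · -- x < t : f strictly monotone on Ici x
    have hmono : StrictMonoOn f (Ici x) := by
      apply strictMonoOn_of_deriv_pos (convex_Ici x)
      · intro s hs
        exact (keyfun_deriv k x hk s (lt_of_lt_of_le hx hs)).continuousAt.continuousWithinAt
      · intro s hs
        rw [interior_Ici] at hs
        rw [(keyfun_deriv k x hk s (hx.trans hs)).deriv]
        have : x ^ k < s ^ k := Real.rpow_lt_rpow hx.le hs hk
        nlinarith
    have := hmono (le_refl x) (le_of_lt hgt) hgt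
    rw [hfx] at this; exact this

/-- Inverse problem computation: for each `x ∈ (0,1]`, the supremum over
`θ ∈ (0,(k+1)/k]` of `log(θ-x) - log(V(θ)-1)` equals `log(x^{-k})` and is attained
uniquely at `θ*(x) = x(k+1)/k`. -/
theorem stmt18 (k : ℝ) (hk : 0 < k) (V : ℝ → ℝ)
    (hV : ∀ θ, V θ = (k*θ/(k+1)) ^ k * (θ/(k+1)) + 1) :
    ∀ x ∈ Set.Ioc (0:ℝ) 1,
      x*(k+1)/k ∈ Set.Ioc (0:ℝ) ((k+1)/k) ∧ x < x*(k+1)/k ∧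
      Real.log (x*(k+1)/k - x) - Real.log (V (x*(k+1)/k) - 1) = Real.log (x ^ (-k)) ∧
      (∀ θ ∈ Set.Ioc (0:ℝ) ((k+1)/k), x < θ → θ ≠ x*(k+1)/k →
        Real.log (θ - x) - Real.log (V θ - 1) < Real.log (x ^ (-k))) := by
  intro x hx
  obtain ⟨hx0, hx1⟩ := hx
  have hk1 : (0:ℝ) < k + 1 := by linarith
  have hkne : k ≠ 0 := hk.ne'
  have hk1ne : k + 1 ≠ 0 := hk1.ne'
  have hxk : 0 < x ^ k := Real.rpow_pos_of_pos hx0 k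
  have hmem : x*(k+1)/k ∈ Set.Ioc (0:ℝ) ((k+1)/k) := by
    constructor
    · positivity
    · rw [div_le_div_iff₀ hk hk]
      nlinarith [mul_nonneg (mul_nonneg (sub_nonneg.2 hx1) hk1.le) hk.le]
  have hlt : x < x*(k+1)/k := by
    rw [lt_div_iff₀ hk]; nlinarith
  refine ⟨hmem, hlt, ?_, ?_⟩
  · -- equality at θ*
    have harg : k * (x*(k+1)/k) / (k+1) = x := by field_simp
    have hdiff : x*(k+1)/k - x = x/k := by
      field_simp
      ring
    have hV1 : V (x*(k+1)/k) - 1 = x ^ (k+1) / k := by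
      rw [hV, harg]
      have h2 : x*(k+1)/k/(k+1) = x/k := by field_simp
      rw [h2]
      have : x ^ (k+1) = x ^ k * x := by rw [Real.rpow_add hx0, Real.rpow_one]
      rw [this]; ring
    rw [hdiff, hV1, Real.log_div hx0.ne' hkne,
      Real.log_div (Real.rpow_pos_of_pos hx0 (k+1)).ne' hkne,
      Real.log_rpow hx0, Real.log_rpow hx0]
    ring
  · intro θ hθ hxθ hne
    obtain ⟨hθ0, hθub⟩ := hθ
    set t := k * θ / (k+1) with htdef
    have ht0 : 0 < t := by positivity
    have hθt : θ = t * (k+1) / k := by rw [htdef]; field_simp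
    have htne : t ≠ x := by
      intro h
      apply hne
      rw [hθt, h]
    have hkey := key k x t hk hx0 ht0 htne
    have hV1 : V θ - 1 = t ^ (k+1) / k := by
      rw [hV]
      have h2 : θ/(k+1) = t/k := by rw [htdef]; field_simp
      rw [h2]
      have : t ^ (k+1) = t ^ k * t := by rw [Real.rpow_add ht0, Real.rpow_one]
      rw [this]; ring
    have hVpos : 0 < t ^ (k+1) / k := by positivity
    rw [hV1]
    have hθx : 0 < θ - x := by linarith
    -- θ - x < x^(-k) * (t^(k+1)/k)
    have hxkneg : x ^ (-k) = (x ^ k)⁻¹ := by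
      rw [Real.rpow_neg hx0.le]
    have hθmx : k * (θ - x) * x ^ k = (k+1)*x^k*t - k*x^(k+1) := by
      rw [hθt]
      have hxx : x ^ (k+1) = x ^ k * x := by rw [Real.rpow_add hx0, Real.rpow_one]
      rw [hxx]; field_simp
    have hineq : θ - x < x ^ (-k) * (t ^ (k+1) / k) := by
      rw [hxkneg]
      have h1 : θ - x < t ^ (k+1) / (k * x ^ k) := by
        rw [lt_div_iff₀ (by positivity)]
        nlinarith
      calc θ - x < t ^ (k+1) / (k * x ^ k) := h1
        _ = (x ^ k)⁻¹ * (t ^ (k+1) / k) := by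
            rw [inv_mul_eq_div, div_div, mul_comm]
    calc Real.log (θ - x) - Real.log (t ^ (k+1) / k)
        < Real.log (x ^ (-k) * (t ^ (k+1) / k)) - Real.log (t ^ (k+1) / k) := by
          gcongr ?_ - _
          exact Real.log_lt_log hθx hineq
      _ = Real.log (x ^ (-k)) := by
          rw [Real.log_mul (by positivity) hVpos.ne']; ring
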